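/- Let K be a field, let g be a finite-dimensional Lie algebra over K, and let [·,·]_* be a Lie algebra bracket on the dual space g*. Let ρ be the coadjoint action of g on g*, given by ρ_X(φ) = −φ∘ad_X, and let σ be the coadjoint action of g* on g, defined (using finite-dimensionality of g) by ψ(σ_φ(X)) = −([φ,ψ]_*)(X) for all ψ ∈ g*. Then ρ and σ are representations, and the matched pair equations hold for (g, g*, ρ, σ) if and only if the cocycle (Lie bialgebra) condition holds: for all X, Y ∈ g and φ, ψ ∈ g*, [φ,ψ]_*([X,Y]) = ([φ∘ad_X, ψ]_* + [φ, ψ∘ad_X]_*)(Y) − ([φ∘ad_Y, ψ]_* + [φ, ψ∘ad_Y]_*)(X), where φ∘ad_X ∈ g* denotes the functional Z ↦ φ([X,Z]). (This is the one-point-base case of the theorems that (A, A*) is a Lie bialgebroid if and only if the cotangent double T*A is a double Lie algebroid, and that vacant double Lie algebroids correspond to matched pairs.) -/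
import Mathlib

/-- A `K`-bilinear, alternating bracket on the `K`-vector space `V` satisfying the
Jacobi identity, i.e. a Lie algebra structure on `V` over `K`. -/
structure IsLieBracket (K V : Type*) [Field K] [AddCommGroup V] [Module K V]
    (br : V → V → V) : Prop where
  add_left : ∀ x y z, br (x + y) z = br x z + br y z
  smul_left : ∀ (k : K) (x z : V), br (k • x) z = k • br x z
  add_right : ∀ x y z, br x (y + z) = br x y + br x z
  smul_right : ∀ (k : K) (x z : V), br x (k • z) = k • br x z
  alternate : ∀ x, br x x = 0
  jacobi : ∀ x y z, br (br x y) z + br (br y z) x + br (br z x) y = 0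

/-- A representation of the `K`-vector space `A`, equipped with the bracket `brA`,
on the `K`-vector space `V`: an assignment `a ↦ ρ_a` of `K`-linear endomorphisms of `V`,
`K`-linear in `a`, taking `brA` to the commutator bracket. -/
structure IsRep (K A V : Type*) [Field K] [AddCommGroup A] [Module K A]
    [AddCommGroup V] [Module K V] (brA : A → A → A) (ρ : A → V → V) : Prop where
  add_arg : ∀ (a : A) (v w : V), ρ a (v + w) = ρ a v + ρ a w
  smul_arg : ∀ (k : K) (a : A) (v : V), ρ a (k • v) = k • ρ a v
  add_act : ∀ (a b : A) (v : V), ρ (a + b) v = ρ a v + ρ b v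
  smul_act : ∀ (k : K) (a : A) (v : V), ρ (k • a) v = k • ρ a v
  bracket_act : ∀ (a b : A) (v : V), ρ (brA a b) v = ρ a (ρ b v) - ρ b (ρ a v)

/-- The functional `φ ∘ ad_X : Z ↦ φ(⁅X, Z⁆)`. -/
def adDual (K g : Type*) [Field K] [LieRing g] [LieAlgebra K g]
    (X : g) (φ : Module.Dual K g) : Module.Dual K g :=
  φ ∘ₗ LieAlgebra.ad K g X

/-- The coadjoint action of `g` on `g*`: `ρ_X φ = −φ ∘ ad_X`. -/
def coadj (K g : Type*) [Field K] [LieRing g] [LieAlgebra K g]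
    (X : g) (φ : Module.Dual K g) : Module.Dual K g :=
  -adDual K g X φ

/-- **Matched pair criterion for Lie bialgebras.** Let `g` be a finite-dimensional Lie
algebra over a field `K` and let `[·,·]_* = brS` be a Lie algebra bracket on `g*`. Let
`ρ_X φ = −φ ∘ ad_X` be the coadjoint action of `g` on `g*`, and let `σ` be the coadjoint
action of `g*` on `g`, characterized by `ψ (σ_φ X) = −[φ, ψ]_* X` for all `ψ ∈ g*`.
Then `ρ` and `σ` are representations, and the matched pair equations hold for
`(g, g*, ρ, σ)` if and only if the cocycle (Lie bialgebra) condition holds. -/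
theorem coadjoint_matchedPair_iff_lieBialgebra
    (K g : Type*) [Field K] [LieRing g] [LieAlgebra K g] [FiniteDimensional K g]
    (brS : Module.Dual K g → Module.Dual K g → Module.Dual K g)
    (hS : IsLieBracket K (Module.Dual K g) brS)
    (σ : Module.Dual K g → g → g)
    (hσ : ∀ (φ : Module.Dual K g) (X : g) (ψ : Module.Dual K g),
      ψ (σ φ X) = -(brS φ ψ) X) :
    IsRep K g (Module.Dual K g) (fun X₁ X₂ => ⁅X₁, X₂⁆) (coadj K g)
    ∧ IsRep K (Module.Dual K g) g brS σ
    ∧ (((∀ (X : g) (φ₁ φ₂ : Module.Dual K g), coadj K g X (brS φ₁ φ₂) =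
          brS (coadj K g X φ₁) φ₂ + brS φ₁ (coadj K g X φ₂)
            + coadj K g (σ φ₂ X) φ₁ - coadj K g (σ φ₁ X) φ₂)
        ∧ (∀ (φ : Module.Dual K g) (X₁ X₂ : g), σ φ ⁅X₁, X₂⁆ =
          ⁅σ φ X₁, X₂⁆ + ⁅X₁, σ φ X₂⁆
            + σ (coadj K g X₂ φ) X₁ - σ (coadj K g X₁ φ) X₂))
      ↔ (∀ (X Y : g) (φ ψ : Module.Dual K g),
          brS φ ψ ⁅X, Y⁆ =
            (brS (adDual K g X φ) ψ + brS φ (adDual K g X ψ)) Y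
              - (brS (adDual K g Y φ) ψ + brS φ (adDual K g Y ψ)) X)) := by
  -- basic consequences of the bracket axioms
  have negL : ∀ x z : Module.Dual K g, brS (-x) z = -brS x z := by
    intro x z; simpa using hS.smul_left (-1 : K) x z
  have negR : ∀ x z : Module.Dual K g, brS x (-z) = -brS x z := by
    intro x z; simpa using hS.smul_right (-1 : K) x z
  have skew : ∀ x y : Module.Dual K g, brS x y = -brS y x := by
    intro x y
    have h0 := hS.alternate (x + y)
    rw [hS.add_left, hS.add_right, hS.add_right, hS.alternate x, hS.alternate y] at h0
    have : brS x y + brS y x = 0 := by simpa using h0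
    exact eq_neg_of_add_eq_zero_left this
  have dext : ∀ {v w : g}, (∀ ψ : Module.Dual K g, ψ v = ψ w) → v = w := by
    intro v w h
    have h2 : ∀ ψ : Module.Dual K g, ψ (v - w) = 0 := fun ψ => by simp [h ψ]
    exact sub_eq_zero.mp ((Module.forall_dual_apply_eq_zero_iff K (v - w)).mp h2)
  have adD : ∀ (X : g) (φ : Module.Dual K g) (Z : g),
      adDual K g X φ Z = φ ⁅X, Z⁆ := fun _ _ _ => rfl
  have coD : ∀ (X : g) (φ : Module.Dual K g) (Z : g),
      coadj K g X φ Z = -φ ⁅X, Z⁆ := fun _ _ _ => rfl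
  -- pairing a functional with brackets involving σ
  have pairR : ∀ (χ φ : Module.Dual K g) (X Z : g),
      χ ⁅Z, σ φ X⁆ = -brS φ (adDual K g Z χ) X := by
    intro χ φ X Z
    have := hσ φ X (adDual K g Z χ)
    rw [adD] at this
    rw [this]
  have pairL : ∀ (χ φ : Module.Dual K g) (X Z : g),
      χ ⁅σ φ X, Z⁆ = brS φ (adDual K g Z χ) X := by
    intro χ φ X Z
    rw [← lie_skew, map_neg, pairR, neg_neg]
  -- key evaluation of the RHS of the σ matched-pair equation
  have keyσ : ∀ (φ ψ : Module.Dual K g) (X₁ X₂ : g),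
      ψ (⁅σ φ X₁, X₂⁆ + ⁅X₁, σ φ X₂⁆
        + σ (coadj K g X₂ φ) X₁ - σ (coadj K g X₁ φ) X₂)
      = (brS (adDual K g X₂ φ) ψ + brS φ (adDual K g X₂ ψ)) X₁
          - (brS (adDual K g X₁ φ) ψ + brS φ (adDual K g X₁ ψ)) X₂ := by
    intro φ ψ X₁ X₂
    have e1 := pairL ψ φ X₁ X₂
    have e2 := pairR ψ φ X₂ X₁
    have c2 : coadj K g X₂ φ = -adDual K g X₂ φ := rfl
    have c1 : coadj K g X₁ φ = -adDual K g X₁ φ := rfl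
    have e3 : ψ (σ (coadj K g X₂ φ) X₁) = (brS (adDual K g X₂ φ) ψ) X₁ := by
      rw [hσ, c2, negL]; simp
    have e4 : ψ (σ (coadj K g X₁ φ) X₂) = (brS (adDual K g X₁ φ) ψ) X₂ := by
      rw [hσ, c1, negL]; simp
    simp only [map_add, map_sub, e1, e2, e3, e4, LinearMap.add_apply, LinearMap.neg_apply]
    ring
  -- key evaluation of the RHS of the ρ matched-pair equation
  have keyρ : ∀ (X Y : g) (φ₁ φ₂ : Module.Dual K g),
      (brS (coadj K g X φ₁) φ₂ + brS φ₁ (coadj K g X φ₂)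
        + coadj K g (σ φ₂ X) φ₁ - coadj K g (σ φ₁ X) φ₂) Y
      = -((brS (adDual K g X φ₁) φ₂ + brS φ₁ (adDual K g X φ₂)) Y)
          + (brS (adDual K g Y φ₁) φ₂ + brS φ₁ (adDual K g Y φ₂)) X := by
    intro X Y φ₁ φ₂
    have c1 : coadj K g X φ₁ = -adDual K g X φ₁ := rfl
    have c2 : coadj K g X φ₂ = -adDual K g X φ₂ := rfl
    have t3 : coadj K g (σ φ₂ X) φ₁ Y = brS (adDual K g Y φ₁) φ₂ X := by
      rw [coD, pairL, skew φ₂ (adDual K g Y φ₁)]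
      simp
    have t4 : coadj K g (σ φ₁ X) φ₂ Y = -brS φ₁ (adDual K g Y φ₂) X := by
      rw [coD, pairL]
    simp only [c1, c2, negL, negR, LinearMap.add_apply, LinearMap.sub_apply,
      LinearMap.neg_apply, t3, t4]
    ring
  refine ⟨?_, ?_, ?_⟩
  · -- coadjoint action of g on g* is a representation
    constructor
    · intro a v w; ext Z; simp [coD, map_add]; ring
    · intro k a v; ext Z; simp [coD]
    · intro a b v; ext Z; simp [coD, add_lie]; ring
    · intro k a v; ext Z; simp [coD, smul_lie]
    · intro a b v; ext Z
      simp only [coD, LinearMap.sub_apply, lie_lie, map_sub]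
      ring
  · -- coadjoint action of g* on g is a representation
    constructor
    · intro a v w; apply dext; intro ψ; simp only [map_add, hσ]; ring
    · intro k a v; apply dext; intro ψ; simp only [map_smul, hσ, smul_eq_mul]; ring
    · intro a b v; apply dext; intro ψ
      simp only [map_add, hσ, hS.add_left, LinearMap.add_apply]; ring
    · intro k a v; apply dext; intro ψ
      simp only [map_smul, hσ, hS.smul_left, LinearMap.smul_apply, smul_eq_mul]; ring
    · intro a b v; apply dext; intro ψ
      have s1 : brS (brS b ψ) a = -brS a (brS b ψ) := skew _ _
      have s2 : brS (brS ψ a) b = brS b (brS a ψ) := by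
        rw [skew ψ a, negL, skew (brS a ψ) b, neg_neg]
      have jac := hS.jacobi a b ψ
      rw [s1, s2] at jac
      have j := LinearMap.congr_fun jac v
      simp only [LinearMap.add_apply, LinearMap.neg_apply, LinearMap.zero_apply] at j
      rw [map_sub]
      simp only [hσ, LinearMap.neg_apply]
      linear_combination -j
  · constructor
    · -- matched pair equations ⇒ cocycle condition
      rintro ⟨-, h2⟩ X Y φ ψ
      have e := congrArg ψ (h2 φ Y X)
      rw [keyσ, hσ] at e
      have hsk : (brS φ ψ) ⁅Y, X⁆ = -(brS φ ψ) ⁅X, Y⁆ := by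
        rw [← lie_skew X Y, map_neg, neg_neg]
      linear_combination e + hsk
    · -- cocycle condition ⇒ matched pair equations
      intro hC
      constructor
      · intro X φ₁ φ₂
        ext Y
        rw [keyρ, coD]
        have := hC X Y φ₁ φ₂
        linear_combination -this
      · intro φ X₁ X₂
        apply dext
        intro ψ
        rw [keyσ, hσ]
        have hsk : (brS φ ψ) ⁅X₂, X₁⁆ = -(brS φ ψ) ⁅X₁, X₂⁆ := by
          rw [← lie_skew X₁ X₂, map_neg, neg_neg]
        linear_combination hC X₂ X₁ φ ψ - hsk
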